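/- arXiv:0905.2997 — 5 statements merged into one kernel-verified Lean document; each statement's English description precedes it below -/
import Mathlib

section
/- If ∅ ≠ T ⊆ S ⊆ H, then for every question q_i and every nonnegative weight function π with π(T) > 0, the shrinkage satisfies Δ_i(T, π) ≤ Δ_i(S, π). -/
open Finset

namespace ActiveLearning

variable {H A : Type*} {m : ℕ}

/-- The total mass of a weight function `v` on a finite set `S`. -/
def mass (v : H → ℝ) (S : Finset H) : ℝ := ∑ s ∈ S, v s

/-- `v` restricted to `S` and normalized. -/
noncomputable def restrict [DecidableEq H] (v : H → ℝ) (S : Finset H) : H → ℝ :=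
  fun h => if h ∈ S then v h / mass v S else 0

/-- The shrinkage `Δ` of a question `qi` on `(S, v)`. -/
noncomputable def shrink [Fintype A] [DecidableEq A] (qi : H → A)
    (S : Finset H) (v : H → ℝ) : ℝ :=
  mass v S - ∑ j : A, (mass v (S.filter fun s => qi s = j)) ^ 2 / mass v S

/-- The collision probability of a distribution `v`. -/
def CP [Fintype H] (v : H → ℝ) : ℝ := ∑ z : H, (v z) ^ 2

/-- Query trees: internal nodes are questions (indexed by `Fin m`), branches are answers,
leaves are hypotheses. -/
inductive QTree (m : ℕ) (H A : Type*) : Type _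
  | leaf : H → QTree m H A
  | node : Fin m → (A → QTree m H A) → QTree m H A

/-- Follow the answers of hypothesis `h` down the tree, returning the leaf reached. -/
def follow (q : Fin m → H → A) : QTree m H A → H → H
  | .leaf h', _ => h'
  | .node i ch, h => follow q (ch (q i h)) h

/-- The cost `c_T(h)`: sum of costs of the questions on the root-to-`h` path. -/
def pathCost (q : Fin m → H → A) (c : Fin m → ℝ) : QTree m H A → H → ℝ
  | .leaf _, _ => 0
  | .node i ch, h => c i + pathCost q c (ch (q i h)) h

/-- The leaves of `T` include `S`: every `h ∈ S` is identified by `T`. -/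
def ValidOn (q : Fin m → H → A) (T : QTree m H A) (S : Finset H) : Prop :=
  ∀ h ∈ S, follow q T h = h

/-- The expected cost `C(T, v)` of a query tree `T` under weights `v`. -/
noncomputable def treeCost [Fintype H] (q : Fin m → H → A) (c : Fin m → ℝ)
    (T : QTree m H A) (v : H → ℝ) : ℝ :=
  ∑ h : H, v h * pathCost q c T h

/-- The questions asked along the root-to-`h` path. -/
def pathQs (q : Fin m → H → A) : QTree m H A → H → List (Fin m)
  | .leaf _, _ => []
  | .node i ch, h => i :: pathQs q (ch (q i h)) h

/-- `T` is a greedy query tree for `π` on version space `S`: at every node it asks a question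
maximizing the shrinkage-cost ratio and recurses on each nonempty answer class. -/
inductive IsGreedy [Fintype A] [DecidableEq A] [DecidableEq H]
    (q : Fin m → H → A) (c : Fin m → ℝ) (π : H → ℝ) :
    QTree m H A → Finset H → Prop
  | leaf (h : H) : IsGreedy q c π (.leaf h) {h}
  | node (S : Finset H) (i : Fin m) (ch : A → QTree m H A)
      (hcard : 1 < S.card)
      (hmax : ∀ j : Fin m,
        shrink (q j) S (restrict π S) / c j ≤ shrink (q i) S (restrict π S) / c i)
      (hch : ∀ a : A, (S.filter fun s => q i s = a).Nonempty →
        IsGreedy q c π (ch a) (S.filter fun s => q i s = a)) :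
      IsGreedy q c π (.node i ch) S

/-- `T` is an `ε`-approximate greedy query tree for `π` on version space `S`. -/
inductive IsApproxGreedy [Fintype A] [DecidableEq A] [DecidableEq H]
    (ε : ℝ) (q : Fin m → H → A) (c : Fin m → ℝ) (π : H → ℝ) :
    QTree m H A → Finset H → Prop
  | leaf (h : H) : IsApproxGreedy ε q c π (.leaf h) {h}
  | node (S : Finset H) (i : Fin m) (ch : A → QTree m H A)
      (hcard : 1 < S.card)
      (happrox : ∀ j : Fin m,
        (1 - ε) * (shrink (q j) S (restrict π S) / c j) ≤
          shrink (q i) S (restrict π S) / c i)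
      (hch : ∀ a : A, (S.filter fun s => q i s = a).Nonempty →
        IsApproxGreedy ε q c π (ch a) (S.filter fun s => q i s = a)) :
      IsApproxGreedy ε q c π (.node i ch) S

/-- `T` is irreducible on version space `S`: every asked question strictly splits the
surviving set. -/
inductive Irreducible [DecidableEq A] (q : Fin m → H → A) :
    QTree m H A → Finset H → Prop
  | leaf (h : H) (S : Finset H) : Irreducible q (.leaf h) S
  | node (S : Finset H) (i : Fin m) (ch : A → QTree m H A)
      (hsplit : ∃ s ∈ S, ∃ t ∈ S, q i s ≠ q i t)
      (hch : ∀ a : A, (S.filter fun s => q i s = a).Nonempty →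
        Irreducible q (ch a) (S.filter fun s => q i s = a)) :
      Irreducible q (.node i ch) S



lemma mass_nonneg (π : H → ℝ) (hπ : ∀ h, 0 ≤ π h) (S : Finset H) : 0 ≤ mass π S :=
  Finset.sum_nonneg fun _ _ => hπ _

lemma mass_mono (π : H → ℝ) (hπ : ∀ h, 0 ≤ π h) {T S : Finset H} (h : T ⊆ S) :
    mass π T ≤ mass π S :=
  Finset.sum_le_sum_of_subset_of_nonneg h fun _ _ _ => hπ _

lemma mass_filter_erase [DecidableEq H] (π : H → ℝ) (qi : H → A) [DecidableEq A]
    {S : Finset H} {x : H} (hx : x ∈ S) (j : A) :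
    mass π (S.filter fun s => qi s = j) =
      mass π ((S.erase x).filter fun s => qi s = j) + (if qi x = j then π x else 0) := by
  rw [Finset.filter_erase]
  unfold mass
  by_cases hj : qi x = j
  · rw [if_pos hj, Finset.sum_erase_add _ _ (Finset.mem_filter.2 ⟨hx, hj⟩)]
  · rw [if_neg hj, add_zero, Finset.erase_eq_of_notMem (by simp [hj])]

lemma shrink_erase_le [Fintype A] [DecidableEq A] [DecidableEq H]
    (π : H → ℝ) (hπ : ∀ h, 0 ≤ π h) (qi : H → A)
    {S : Finset H} {x : H} (hx : x ∈ S) (hA : 0 < mass π (S.erase x)) :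
    shrink qi (S.erase x) π ≤ shrink qi S π := by
  set Am := mass π (S.erase x) with hAm
  set w := π x with hw
  have hw0 : 0 ≤ w := hπ x
  have hS : mass π S = Am + w := (Finset.sum_erase_add S π hx).symm
  set b : A → ℝ := fun j => mass π ((S.erase x).filter fun s => qi s = j) with hb
  have hbn : ∀ j, 0 ≤ b j := fun j => mass_nonneg π hπ _
  have hsum : ∑ j : A, (mass π (S.filter fun s => qi s = j)) ^ 2
      = (∑ j : A, b j ^ 2) + (2 * b (qi x) * w + w ^ 2) := by
    have h1 : ∀ j : A, (mass π (S.filter fun s => qi s = j)) ^ 2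
        = b j ^ 2 + (if qi x = j then 2 * b j * w + w ^ 2 else 0) := by
      intro j
      rw [mass_filter_erase π qi hx j]
      by_cases hj : qi x = j <;> simp [hj] <;> ring
    rw [Finset.sum_congr rfl fun j _ => h1 j, Finset.sum_add_distrib,
      Finset.sum_ite_eq _ (qi x) (fun j => 2 * b j * w + w ^ 2), if_pos (Finset.mem_univ _)]
  set a := b (qi x) with ha
  set Sa := ∑ j : A, b j ^ 2 with hSa
  have ha2 : a ^ 2 ≤ Sa := by
    rw [hSa]
    exact Finset.single_le_sum (f := fun j => b j ^ 2) (fun j _ => sq_nonneg _)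
      (Finset.mem_univ (qi x))
  have e1 : shrink qi (S.erase x) π = (Am ^ 2 - Sa) / Am := by
    unfold shrink
    rw [← Finset.sum_div, ← hAm, ← hSa]
    field_simp
  have e2 : shrink qi S π = ((Am + w) ^ 2 - (Sa + (2 * a * w + w ^ 2))) / (Am + w) := by
    have hB : (0:ℝ) < Am + w := by linarith
    unfold shrink
    rw [← Finset.sum_div, hsum, hS]
    field_simp
  have hB : (0:ℝ) < Am + w := by linarith
  rw [e1, e2, div_le_div_iff₀ hA hB]
  nlinarith [mul_nonneg hw0 (sq_nonneg (Am - a)), mul_nonneg hw0 (sub_nonneg.2 ha2),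
    hbn (qi x)]

/-- If `∅ ≠ T ⊆ S ⊆ H`, then for every question `q_i` and every nonnegative
weight function `π` with `π(T) > 0`, the shrinkage satisfies `Δ_i(T, π) ≤ Δ_i(S, π)`. -/
theorem shrink_mono [Fintype A] [DecidableEq A]
    (π : H → ℝ) (hπ : ∀ h, 0 ≤ π h)
    (qi : H → A)
    (T S : Finset H) (hT : T.Nonempty) (hTS : T ⊆ S)
    (hmass : 0 < mass π T) :
    shrink qi T π ≤ shrink qi S π := by
  classical
  revert hTS
  induction S using Finset.strongInduction with
  | _ S ih =>
    intro hTS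
    by_cases hE : T = S
    · subst hE; exact le_refl _
    · have hss : T ⊂ S := hTS.ssubset_of_ne hE
      obtain ⟨x, hxS, hxT⟩ := Finset.exists_of_ssubset hss
      have hTe : T ⊆ S.erase x := Finset.subset_erase.2 ⟨hTS, hxT⟩
      have hA : 0 < mass π (S.erase x) := lt_of_lt_of_le hmass (mass_mono π hπ hTe)
      exact le_trans (ih (S.erase x) (Finset.erase_ssubset hxS) hTe)
        (shrink_erase_le π hπ qi hxS hA)
end ActiveLearning
end

section
/- Let v be a probability distribution on S ⊆ H with v(s) > 0 on S, and let Δ > 0, c > 0. If Δ_i(S, v)/c_i < Δ/c for every question q_i, then for every nonempty R ⊆ S and every query tree T whose leaves include R, C(T, v_R) ≥ (c/Δ) · v(R) · (1 − CP(v_R)). -/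
open Finset

namespace ActiveLearning

variable {H A : Type*} {m : ℕ}

private lemma diag_step {A : Type*} [Fintype A] [DecidableEq A]
    (a : A → ℝ) (ha : ∀ j, 0 ≤ a j) (hr : 0 < ∑ j, a j) (t : A) (bt : ℝ) (hbt : a t ≤ bt) :
    (∑ j, a j) - (∑ j, (a j)^2)/(∑ j, a j) ≤
    (∑ j, Function.update a t bt j) - (∑ j, (Function.update a t bt j)^2)/(∑ j, Function.update a t bt j) := by
  have e1 : ∀ j, Function.update a t bt j = a j + (if j = t then bt - a t else 0) := by
    intro j; by_cases h : j = t <;> simp [h, Function.update]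
  have e2 : ∀ j, (Function.update a t bt j)^2 = (a j)^2 + (if j = t then bt^2 - (a t)^2 else 0) := by
    intro j; by_cases h : j = t <;> simp [h, Function.update]
  have hs1 : ∑ j, Function.update a t bt j = (∑ j, a j) + (bt - a t) := by
    simp [e1, Finset.sum_add_distrib]
  have hs2 : ∑ j, (Function.update a t bt j)^2 = (∑ j, (a j)^2) + (bt^2 - (a t)^2) := by
    simp [e2, Finset.sum_add_distrib]
  rw [hs1, hs2]
  set r := ∑ j, a j with hrdef
  set Q := ∑ j, (a j)^2 with hQdef
  have hδ : 0 ≤ bt - a t := by linarith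
  have hr' : 0 < r + (bt - a t) := by linarith
  have hat : a t ≤ r := Finset.single_le_sum (fun j _ => ha j) (mem_univ t)
  have hq : (a t)^2 ≤ Q := Finset.single_le_sum (fun j _ => sq_nonneg (a j)) (mem_univ t)
  have key : (r + (bt - a t)) * (r^2 - Q) ≤ r * ((r + (bt - a t))^2 - (Q + (bt^2 - (a t)^2))) := by
    nlinarith [mul_nonneg hδ (sq_nonneg (r - a t)), mul_nonneg hδ (by linarith : (0:ℝ) ≤ Q - (a t)^2)]
  have g1 : r - Q/r = (r^2 - Q)/r := by field_simp
  have g2 : r + (bt - a t) - (Q + (bt^2 - (a t)^2))/(r + (bt - a t))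
      = ((r + (bt - a t))^2 - (Q + (bt^2 - (a t)^2)))/(r + (bt - a t)) := by field_simp
  rw [g1, g2, div_le_div_iff₀ hr hr']
  nlinarith [key]

private lemma diag_mono_aux {A : Type*} [Fintype A] [DecidableEq A] (s : Finset A) :
    ∀ (a b : A → ℝ), (∀ j, 0 ≤ a j) → (∀ j, a j ≤ b j) → (∀ j ∉ s, a j = b j) → 0 < ∑ j, a j →
    (∑ j, a j) - (∑ j, (a j)^2)/(∑ j, a j) ≤ (∑ j, b j) - (∑ j, (b j)^2)/(∑ j, b j) := by
  induction s using Finset.induction_on with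
  | empty =>
    intro a b _ _ hagree _
    have : a = b := funext fun j => hagree j (by simp)
    rw [this]
  | insert t s hts ih =>
    intro a b ha hab hagree hr
    set a' := Function.update a t (b t) with ha'def
    have h1 := diag_step a ha hr t (b t) (hab t)
    have ha' : ∀ j, 0 ≤ a' j := by
      intro j; by_cases h : j = t <;> simp [ha'def, h, Function.update]
      · exact le_trans (ha t) (hab t)
      · exact ha j
    have ha'b : ∀ j, a' j ≤ b j := by
      intro j; by_cases h : j = t <;> simp [ha'def, h, Function.update]
      · exact hab j
    have hagree' : ∀ j ∉ s, a' j = b j := by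
      intro j hj
      by_cases h : j = t
      · simp [ha'def, h, Function.update]
      · simp only [ha'def, Function.update, dif_neg h]
        exact hagree j (by simp [h, hj])
    have haa' : ∀ j, a j ≤ a' j := by
      intro j; by_cases h : j = t <;> simp [ha'def, h, Function.update]
      exact hab t
    have hr' : 0 < ∑ j, a' j := lt_of_lt_of_le hr (Finset.sum_le_sum fun j _ => haa' j)
    exact le_trans h1 (ih a' b ha' ha'b hagree' hr')

private lemma diag_mono {A : Type*} [Fintype A] [DecidableEq A] (a b : A → ℝ)
    (ha : ∀ j, 0 ≤ a j) (hab : ∀ j, a j ≤ b j) (hr : 0 < ∑ j, a j) :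
    (∑ j, a j) - (∑ j, (a j)^2)/(∑ j, a j) ≤ (∑ j, b j) - (∑ j, (b j)^2)/(∑ j, b j) :=
  diag_mono_aux Finset.univ a b ha hab (fun j hj => absurd (mem_univ j) hj) hr

private lemma sum_restrict_mul [Fintype H] [DecidableEq H] (v : H → ℝ) (R : Finset H) (F : H → ℝ) :
    ∑ h : H, restrict v R h * F h = ∑ h ∈ R, (v h / mass v R) * F h := by
  rw [← Finset.sum_subset (Finset.subset_univ R) (fun x _ hx => by simp [restrict, hx])]
  exact Finset.sum_congr rfl fun h hh => by simp [restrict, hh]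


/-- If `Δ_i(S, v)/c_i < Δ/c` for every question `q_i`, then for every nonempty
`R ⊆ S` and every query tree `T` whose leaves include `R`,
`C(T, v_R) ≥ (c/Δ) · v(R) · (1 − CP(v_R))`. -/
theorem tree_cost_lower_bound [Fintype H] [Fintype A] [DecidableEq H] [DecidableEq A]
    (q : Fin m → H → A) (c : Fin m → ℝ) (hc : ∀ i, 0 < c i)
    (S : Finset H) (v : H → ℝ)
    (hvpos : ∀ s ∈ S, 0 < v s) (hv0 : ∀ s ∉ S, v s = 0) (hv1 : mass v S = 1)
    (Δ c0 : ℝ) (hΔ : 0 < Δ) (hc0 : 0 < c0)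
    (hshrink : ∀ i : Fin m, shrink (q i) S v / c i < Δ / c0)
    (R : Finset H) (hR : R.Nonempty) (hRS : R ⊆ S)
    (T : QTree m H A) (hT : ValidOn q T R) :
    (c0 / Δ) * mass v R * (1 - CP (restrict v R)) ≤ treeCost q c T (restrict v R) := by
  -- general facts
  have hmasspos : ∀ X : Finset H, X ⊆ S → X.Nonempty → 0 < mass v X := by
    intro X hXS hXne
    exact Finset.sum_pos (fun s hs => hvpos s (hXS hs)) hXne
  have hCPeq : ∀ X : Finset H, X ⊆ S → X.Nonempty →
      mass v X * (1 - CP (restrict v X)) = mass v X - (∑ h ∈ X, (v h)^2) / mass v X := by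
    intro X hXS hXne
    have hM := hmasspos X hXS hXne
    have : CP (restrict v X) = (∑ h ∈ X, (v h)^2) / (mass v X)^2 := by
      unfold CP
      rw [← Finset.sum_subset (Finset.subset_univ X) (fun x _ hx => by simp [restrict, hx]),
        Finset.sum_div]
      exact Finset.sum_congr rfl fun h hh => by simp [restrict, hh]; rw [div_pow]
    rw [this]
    field_simp
  induction T generalizing R with
  | leaf h' =>
    have hRsing : R = {h'} := by
      obtain ⟨x, hx⟩ := hR
      have h1 : ∀ y ∈ R, y = h' := fun y hy => (hT y hy).symm
      have hh' : h' ∈ R := h1 x hx ▸ hx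
      exact Finset.eq_singleton_iff_unique_mem.mpr ⟨hh', h1⟩
    subst hRsing
    have hv' : 0 < v h' := hvpos h' (hRS (Finset.mem_singleton_self h'))
    have htc : treeCost q c (QTree.leaf h') (restrict v {h'}) = 0 := by
      simp [treeCost, pathCost]
    have hQ : (∑ h ∈ ({h'} : Finset H), (v h)^2) = (v h')^2 := by simp
    have hM : mass v ({h'} : Finset H) = v h' := by simp [mass]
    have := hCPeq {h'} hRS ⟨h', Finset.mem_singleton_self h'⟩
    rw [hQ, hM] at this
    have hCP1 : CP (restrict v {h'}) = 1 := by
      have h2 : v h' * (1 - CP (restrict v {h'})) = v h' - (v h')^2 / v h' := this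
      have h3 : (v h')^2 / v h' = v h' := by field_simp
      rw [h3] at h2
      have := mul_left_cancel₀ hv'.ne' (by linarith [h2] : v h' * (1 - CP (restrict v {h'})) = v h' * 0)
      linarith
    rw [htc, hCP1]
    simp
  | node i ch ih =>
    set M := mass v R with hMdef
    have hM : 0 < M := hmasspos R hRS hR
    set Ra : A → Finset H := fun a => R.filter fun s => q i s = a with hRadef
    -- tree cost decomposition
    have hsum1 : ∑ h : H, restrict v R h = 1 := by
      have h0 := sum_restrict_mul (H := H) v R (fun _ => 1)
      simp only [mul_one] at h0
      rw [h0, ← Finset.sum_div]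
      exact div_self hM.ne'
    have htc : treeCost q c (QTree.node i ch) (restrict v R)
        = c i + ∑ a : A, ∑ h ∈ Ra a, (v h / M) * pathCost q c (ch a) h := by
      unfold treeCost
      have e1 : ∀ h : H, restrict v R h * pathCost q c (QTree.node i ch) h
          = restrict v R h * c i + restrict v R h * pathCost q c (ch (q i h)) h := by
        intro h; simp [pathCost]; ring
      rw [Finset.sum_congr rfl (fun h _ => e1 h), Finset.sum_add_distrib]
      congr 1
      · rw [← Finset.sum_mul, hsum1, one_mul]
      · rw [sum_restrict_mul v R (fun h => pathCost q c (ch (q i h)) h),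
          ← Finset.sum_fiberwise R (fun s => q i s) (fun h => (v h / M) * pathCost q c (ch (q i h)) h)]
        exact Finset.sum_congr rfl fun a _ => Finset.sum_congr rfl fun h hh => by
          rw [(Finset.mem_filter.1 hh).2]
    -- per-answer lower bound
    have hperA : ∀ a : A, (c0/Δ) * ((mass v (Ra a))^2 - ∑ h ∈ Ra a, (v h)^2) / M
        ≤ ∑ h ∈ Ra a, (v h / M) * pathCost q c (ch a) h := by
      intro a
      by_cases hne : (Ra a).Nonempty
      · have hRaS : Ra a ⊆ S := (Finset.filter_subset _ R).trans hRS
        have hMa : 0 < mass v (Ra a) := hmasspos _ hRaS hne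
        have hvalid : ValidOn q (ch a) (Ra a) := by
          intro h hh
          have h2 := hT h (Finset.filter_subset _ R hh)
          have h3 : q i h = a := (Finset.mem_filter.1 hh).2
          simpa [follow, h3] using h2
        have hIH := ih a (Ra a) hne hRaS hvalid
        rw [mul_assoc, hCPeq (Ra a) hRaS hne] at hIH
        have heq : ∑ h ∈ Ra a, (v h / M) * pathCost q c (ch a) h
            = (mass v (Ra a) / M) * treeCost q c (ch a) (restrict v (Ra a)) := by
          unfold treeCost
          rw [sum_restrict_mul v (Ra a) (fun h => pathCost q c (ch a) h), Finset.mul_sum]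
          exact Finset.sum_congr rfl fun h hh => by field_simp
        rw [heq]
        calc (c0/Δ) * ((mass v (Ra a))^2 - ∑ h ∈ Ra a, (v h)^2) / M
            = (mass v (Ra a) / M) * ((c0/Δ) * (mass v (Ra a) - (∑ h ∈ Ra a, (v h)^2) / mass v (Ra a))) := by
              field_simp
          _ ≤ (mass v (Ra a) / M) * treeCost q c (ch a) (restrict v (Ra a)) := by
              exact mul_le_mul_of_nonneg_left hIH (by positivity)
      · rw [Finset.not_nonempty_iff_eq_empty] at hne
        simp [hne, mass]
    -- shrinkage bound via monotonicity
    have hfibR : ∑ a : A, mass v (Ra a) = M := by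
      exact Finset.sum_fiberwise R (fun s => q i s) v
    have hfibS : ∑ a : A, mass v (S.filter fun s => q i s = a) = mass v S := by
      simpa [mass] using Finset.sum_fiberwise S (fun s => q i s) v
    have hmono := diag_mono (fun a => mass v (Ra a)) (fun a => mass v (S.filter fun s => q i s = a))
      (fun a => Finset.sum_nonneg fun s hs => (hvpos s (((Finset.filter_subset _ R).trans hRS) hs)).le)
      (fun a => Finset.sum_le_sum_of_subset_of_nonneg
        (Finset.filter_subset_filter _ hRS) (fun s hs _ => (hvpos s (Finset.mem_filter.1 hs).1).le))
      (by rw [hfibR]; exact hM)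
    rw [hfibR, hfibS] at hmono
    have hshr : M - (∑ a : A, (mass v (Ra a))^2) / M ≤ shrink (q i) S v := by
      unfold shrink
      rw [← Finset.sum_div]
      exact hmono
    have hci : (c0/Δ) * (M - (∑ a : A, (mass v (Ra a))^2) / M) ≤ c i := by
      have h1 : shrink (q i) S v < c i * (Δ / c0) := by
        have := hshrink i
        calc shrink (q i) S v = (shrink (q i) S v / c i) * c i := by
              rw [div_mul_cancel₀ _ (hc i).ne']
          _ < (Δ / c0) * c i := by exact mul_lt_mul_of_pos_right this (hc i)
          _ = c i * (Δ / c0) := by ring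
      have h2 : (c0/Δ) * (c i * (Δ/c0)) = c i := by field_simp
      have h3 : (c0/Δ) * shrink (q i) S v ≤ (c0/Δ) * (c i * (Δ/c0)) :=
        mul_le_mul_of_nonneg_left h1.le (by positivity)
      have h4 : (c0/Δ) * (M - (∑ a : A, (mass v (Ra a))^2) / M) ≤ (c0/Δ) * shrink (q i) S v :=
        mul_le_mul_of_nonneg_left hshr (by positivity)
      linarith
    -- assemble
    have hQfib : ∑ a : A, ∑ h ∈ Ra a, (v h)^2 = ∑ h ∈ R, (v h)^2 :=
      Finset.sum_fiberwise R (fun s => q i s) (fun h => (v h)^2)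
    have hsumA : ∑ a : A, (c0/Δ) * ((mass v (Ra a))^2 - ∑ h ∈ Ra a, (v h)^2) / M
        = (c0/Δ) * ((∑ a : A, (mass v (Ra a))^2) - ∑ h ∈ R, (v h)^2) / M := by
      rw [← hQfib, ← Finset.sum_sub_distrib]
      rw [Finset.mul_sum, Finset.sum_div]
    have hlower : c i + (c0/Δ) * ((∑ a : A, (mass v (Ra a))^2) - ∑ h ∈ R, (v h)^2) / M
        ≤ treeCost q c (QTree.node i ch) (restrict v R) := by
      rw [htc]
      have := Finset.sum_le_sum (fun a (_ : a ∈ (univ : Finset A)) => hperA a)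
      rw [hsumA] at this
      linarith
    rw [mul_assoc, hCPeq R hRS hR]
    have hid : (c0/Δ) * (M - (∑ h ∈ R, (v h)^2)/M)
        = (c0/Δ) * (M - (∑ a : A, (mass v (Ra a))^2) / M)
          + (c0/Δ) * ((∑ a : A, (mass v (Ra a))^2) - ∑ h ∈ R, (v h)^2) / M := by
      field_simp
      ring
    rw [← hMdef, hid]
    linarith

end ActiveLearning
end

section
/- Let S ⊆ H with |S| > 1 and h_0 ∈ S with π_S(h_0) > 1/2, let R = S \ {h_0}, and let T* be any query tree whose leaves contain S. Then some question q_i satisfies δ_i / c_i ≥ 1 / C*(h_0). -/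
open Finset

namespace ActiveLearning

variable {H A : Type*} {m : ℕ}

lemma pathCost_eq_sum (q : Fin m → H → A) (c : Fin m → ℝ) (T : QTree m H A) (h : H) :
    pathCost q c T h = ((pathQs q T h).map c).sum := by
  induction T with
  | leaf h' => simp [pathCost, pathQs]
  | node i ch ih => simp [pathCost, pathQs, ih]

lemma exists_sep (q : Fin m → H → A) (T : QTree m H A) (h0 r : H)
    (hr : follow q T r = r) (h0f : follow q T h0 = h0) (hne : r ≠ h0) :
    ∃ i ∈ pathQs q T h0, q i r ≠ q i h0 := by
  induction T with
  | leaf h' =>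
    simp only [follow] at hr h0f
    exact absurd (hr.symm.trans h0f) hne
  | node i ch ih =>
    by_cases hq : q i r = q i h0
    · simp only [follow] at hr h0f
      rw [hq] at hr
      obtain ⟨j, hj, hjne⟩ := ih (q i h0) hr h0f
      exact ⟨j, List.mem_cons_of_mem _ hj, hjne⟩
    · exact ⟨i, List.mem_cons_self, hq⟩

lemma sum_toFinset_le {α : Type*} [DecidableEq α] {f : α → ℝ} (hf : ∀ a, 0 ≤ f a)
    (l : List α) : ∑ a ∈ l.toFinset, f a ≤ (l.map f).sum := by
  induction l with
  | nil => simp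
  | cons a l ih =>
    simp only [List.toFinset_cons, List.map_cons, List.sum_cons]
    by_cases h : a ∈ l.toFinset
    · rw [Finset.insert_eq_self.2 h]
      linarith [hf a]
    · rw [Finset.sum_insert h]; linarith

/-- If `h_0 ∈ S` has `π_S(h_0) > 1/2` and `T*` is any query tree whose leaves
contain `S`, then some question `q_i` satisfies `δ_i / c_i ≥ 1 / C*(h_0)`, where
`R = S \ {h_0}` and `δ_i = π_R({r ∈ R : q_i(r) ≠ q_i(h_0)})`. -/
theorem exists_separating_question [Fintype H] [Fintype A] [DecidableEq H] [DecidableEq A]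
    (π : H → ℝ) (hπpos : ∀ h, 0 < π h) (hπsum : ∑ h : H, π h = 1)
    (hH : 1 < Fintype.card H)
    (q : Fin m → H → A) (c : Fin m → ℝ) (hc : ∀ i, 0 < c i)
    (S : Finset H) (hS : 1 < S.card)
    (h0 : H) (h0S : h0 ∈ S) (hh0 : 1 / 2 < restrict π S h0)
    (Tstar : QTree m H A) (hTstar : ValidOn q Tstar S) :
    ∃ i : Fin m,
      1 / pathCost q c Tstar h0 ≤
        mass (restrict π (S.erase h0))
          ((S.erase h0).filter fun r => q i r ≠ q i h0) / c i := by
  classical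
  set R := S.erase h0 with hRdef
  set vR := restrict π R with hvRdef
  set L := pathQs q Tstar h0 with hLdef
  set F := L.toFinset with hFdef
  -- get an element of S other than h0
  obtain ⟨r0, hr0S, hr0ne⟩ : ∃ r ∈ S, r ≠ h0 := by
    obtain ⟨a, ha, b, hb, hab⟩ := Finset.one_lt_card.mp hS
    rcases eq_or_ne a h0 with rfl | h
    · exact ⟨b, hb, fun hbe => hab hbe.symm⟩
    · exact ⟨a, ha, h⟩
  have hRne : R.Nonempty := ⟨r0, Finset.mem_erase.2 ⟨hr0ne, hr0S⟩⟩
  have hmassR : 0 < mass π R := Finset.sum_pos (fun h _ => hπpos h) hRne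
  have hvRnn : ∀ h, 0 ≤ vR h := by
    intro h
    simp only [hvRdef, restrict]
    split
    · exact div_nonneg (hπpos h).le hmassR.le
    · exact le_refl 0
  have hmassvR : mass vR R = 1 := by
    simp only [hvRdef, mass, restrict]
    rw [Finset.sum_congr rfl (fun x hx => if_pos hx), ← Finset.sum_div]
    exact div_self (ne_of_gt hmassR)
  -- each r ∈ R is separated from h0 by some question on the path
  have hsep : ∀ r ∈ R, ∃ j ∈ F, q j r ≠ q j h0 := by
    intro r hr
    have hrS : r ∈ S := Finset.mem_of_mem_erase hr
    have hrne : r ≠ h0 := (Finset.mem_erase.1 hr).1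
    obtain ⟨j, hj, hjne⟩ := exists_sep q Tstar h0 r (hTstar r hrS) (hTstar h0 h0S) hrne
    exact ⟨j, List.mem_toFinset.2 hj, hjne⟩
  set δ : Fin m → ℝ := fun j => mass vR (R.filter fun r => q j r ≠ q j h0) with hδdef
  have hδnn : ∀ j, 0 ≤ δ j := fun j => Finset.sum_nonneg (fun x _ => hvRnn x)
  -- 1 ≤ ∑_{j ∈ F} δ j
  have hkey : 1 ≤ ∑ j ∈ F, δ j := by
    have h1 : (1 : ℝ) = ∑ r ∈ R, vR r := hmassvR.symm
    have h2 : ∀ r ∈ R, vR r ≤ ∑ j ∈ F, (if q j r ≠ q j h0 then vR r else 0) := by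
      intro r hr
      obtain ⟨j, hjF, hjne⟩ := hsep r hr
      calc vR r = (if q j r ≠ q j h0 then vR r else 0) := by rw [if_pos hjne]
        _ ≤ ∑ j ∈ F, (if q j r ≠ q j h0 then vR r else 0) := by
            apply Finset.single_le_sum (f := fun j => if q j r ≠ q j h0 then vR r else 0)
              (fun k _ => by split_ifs <;> simp [hvRnn r]) hjF
    calc (1 : ℝ) = ∑ r ∈ R, vR r := h1
      _ ≤ ∑ r ∈ R, ∑ j ∈ F, (if q j r ≠ q j h0 then vR r else 0) :=
          Finset.sum_le_sum h2
      _ = ∑ j ∈ F, ∑ r ∈ R, (if q j r ≠ q j h0 then vR r else 0) := Finset.sum_comm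
      _ = ∑ j ∈ F, δ j := by
          refine Finset.sum_congr rfl fun j _ => ?_
          rw [hδdef]
          simp only [mass, Finset.sum_filter]
  have hFne : F.Nonempty := by
    obtain ⟨j, hjF, _⟩ := hsep r0 (Finset.mem_erase.2 ⟨hr0ne, hr0S⟩)
    exact ⟨j, hjF⟩
  obtain ⟨i, hiF, hmax⟩ := Finset.exists_max_image F (fun j => δ j / c j) hFne
  refine ⟨i, ?_⟩
  have hCsum : pathCost q c Tstar h0 = (L.map c).sum := pathCost_eq_sum q c Tstar h0
  have hcnn : ∀ j, 0 ≤ c j := fun j => (hc j).le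
  have hFle : ∑ j ∈ F, c j ≤ (L.map c).sum := sum_toFinset_le hcnn L
  have hFcpos : 0 < ∑ j ∈ F, c j := Finset.sum_pos (fun j _ => hc j) hFne
  have hCpos : 0 < pathCost q c Tstar h0 := by rw [hCsum]; linarith
  have hratio_nn : 0 ≤ δ i / c i := div_nonneg (hδnn i) (hcnn i)
  have hchain : 1 ≤ (δ i / c i) * pathCost q c Tstar h0 := by
    calc (1 : ℝ) ≤ ∑ j ∈ F, δ j := hkey
      _ = ∑ j ∈ F, (δ j / c j) * c j := by
          refine Finset.sum_congr rfl fun j _ => ?_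
          rw [div_mul_cancel₀ _ (hc j).ne']
      _ ≤ ∑ j ∈ F, (δ i / c i) * c j :=
          Finset.sum_le_sum fun j hj =>
            mul_le_mul_of_nonneg_right (hmax j hj) (hcnn j)
      _ = (δ i / c i) * ∑ j ∈ F, c j := by rw [Finset.mul_sum]
      _ ≤ (δ i / c i) * pathCost q c Tstar h0 := by
          rw [hCsum]; exact mul_le_mul_of_nonneg_left hFle hratio_nn
  rw [div_le_iff₀ hCpos]
  linarith
end ActiveLearning
end

section
/- Let S ⊆ H with |S| > 1 and h_0 ∈ S with π_S(h_0) > 1/2, and let R = S \ {h_0}. Then for every question q_i, the shrinkage satisfies δ_i · π_S(R) ≤ Δ_i(S, π_S) ≤ 2 · δ_i · π_S(R). -/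
open Finset

namespace ActiveLearning

variable {H A : Type*} {m : ℕ}

/-- If `h_0 ∈ S` has `π_S(h_0) > 1/2` and `R = S \ {h_0}`, then for every
question `q_i`, `δ_i · π_S(R) ≤ Δ_i(S, π_S) ≤ 2 · δ_i · π_S(R)`. -/
theorem shrink_bounds [Fintype H] [Fintype A] [DecidableEq H] [DecidableEq A]
    (π : H → ℝ) (hπpos : ∀ h, 0 < π h) (hπsum : ∑ h : H, π h = 1)
    (hH : 1 < Fintype.card H)
    (q : Fin m → H → A)
    (S : Finset H) (hS : 1 < S.card)
    (h0 : H) (h0S : h0 ∈ S) (hh0 : 1 / 2 < restrict π S h0)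
    (i : Fin m) :
    mass (restrict π (S.erase h0)) ((S.erase h0).filter fun r => q i r ≠ q i h0) *
        mass (restrict π S) (S.erase h0) ≤
      shrink (q i) S (restrict π S) ∧
    shrink (q i) S (restrict π S) ≤
      2 * (mass (restrict π (S.erase h0)) ((S.erase h0).filter fun r => q i r ≠ q i h0) *
        mass (restrict π S) (S.erase h0)) := by

  classical
  set j0 := q i h0 with hj0
  set R := S.erase h0 with hR
  have hSne : S.Nonempty := Finset.card_pos.mp (by omega)
  have hM : 0 < mass π S := Finset.sum_pos (fun h _ => hπpos h) hSne
  have hRne : R.Nonempty := by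
    rw [← Finset.card_pos, hR, Finset.card_erase_of_mem h0S]; omega
  have hMR : 0 < mass π R := Finset.sum_pos (fun h _ => hπpos h) hRne
  -- restrict mass formula
  have hrest : ∀ (T U : Finset H), U ⊆ T → mass (restrict π T) U = mass π U / mass π T := by
    intro T U hU
    unfold mass restrict
    rw [Finset.sum_div]
    exact Finset.sum_congr rfl fun x hx => if_pos (hU hx)
  set Rd := R.filter (fun r => q i r ≠ j0) with hRd
  have hRdS : Rd = S.filter (fun r => ¬ q i r = j0) := by
    ext s
    simp only [hRd, hR, Finset.mem_filter, Finset.mem_erase, ne_eq]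
    constructor
    · rintro ⟨⟨_, hs⟩, hq⟩; exact ⟨hs, hq⟩
    · rintro ⟨hs, hq⟩; exact ⟨⟨fun e => hq (by rw [e]), hs⟩, hq⟩
  set b : A → ℝ := fun j => mass π (S.filter fun s => q i s = j) with hb
  have hbnn : ∀ j, 0 ≤ b j := fun j =>
    Finset.sum_nonneg fun h _ => (hπpos h).le
  have hsplit : b j0 + mass π Rd = mass π S := by
    rw [hRdS, hb]
    exact Finset.sum_filter_add_sum_filter_not S _ π
  have hfib : ∑ j : A, b j = mass π S := Finset.sum_fiberwise S (fun s => q i s) π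
  have hfib2 : b j0 + ∑ j ∈ Finset.univ.erase j0, b j = mass π S := by
    rw [Finset.add_sum_erase _ b (Finset.mem_univ j0)]; exact hfib
  have hDval : ∑ j ∈ Finset.univ.erase j0, b j = mass π Rd := by linarith
  -- LHS product simplification
  have hprod : mass (restrict π R) Rd * mass (restrict π S) R = mass π Rd / mass π S := by
    rw [hrest R Rd (Finset.filter_subset _ _), hrest S R (Finset.erase_subset _ _)]
    field_simp
  -- pi h0 ≤ b j0
  have hb0 : π h0 ≤ b j0 := by
    rw [hb]
    exact Finset.single_le_sum (f := π) (fun h _ => (hπpos h).le)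
      (Finset.mem_filter.mpr ⟨h0S, rfl⟩)
  have hh0' : restrict π S h0 = π h0 / mass π S := by
    unfold restrict; rw [if_pos h0S]
  rw [hh0'] at hh0
  have hb0half : mass π S < 2 * b j0 := by
    have := (lt_div_iff₀ hM).mp hh0
    nlinarith
  -- shrink simplification
  have hshr : shrink (q i) S (restrict π S) = 1 - ∑ j : A, (b j / mass π S) ^ 2 := by
    unfold shrink
    rw [hrest S S (le_refl S)]
    rw [div_self hM.ne']
    congr 1
    refine Finset.sum_congr rfl fun j _ => ?_
    rw [hrest S _ (Finset.filter_subset _ _), div_one]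
  -- sum of squares split
  have hsq : ∑ j : A, (b j / mass π S) ^ 2 =
      (b j0 / mass π S) ^ 2 + (∑ j ∈ Finset.univ.erase j0, (b j) ^ 2) / (mass π S) ^ 2 := by
    rw [← Finset.add_sum_erase _ _ (Finset.mem_univ j0), Finset.sum_div]
    congr 1
    exact Finset.sum_congr rfl fun j _ => by rw [div_pow]
  have hs2nn : 0 ≤ ∑ j ∈ Finset.univ.erase j0, (b j) ^ 2 :=
    Finset.sum_nonneg fun j _ => sq_nonneg _
  have hs2le : ∑ j ∈ Finset.univ.erase j0, (b j) ^ 2 ≤ (mass π Rd) ^ 2 := by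
    rw [← hDval]
    exact Finset.sum_sq_le_sq_sum_of_nonneg fun j _ => hbnn j
  have hDnn : 0 ≤ mass π Rd := Finset.sum_nonneg fun h _ => (hπpos h).le
  have hD : mass π Rd = mass π S - b j0 := by linarith
  rw [hprod, hshr, hsq]
  have hM2 : (0:ℝ) < (mass π S) ^ 2 := by positivity
  constructor
  · rw [div_pow, ← add_div, le_sub_iff_add_le,
      div_add_div _ _ hM.ne' hM2.ne', div_le_one (by positivity)]
    have inner : mass π Rd * mass π S + (b j0 ^ 2 + ∑ j ∈ Finset.univ.erase j0, b j ^ 2)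
        ≤ mass π S ^ 2 := by
      nlinarith [mul_nonneg hDnn (by linarith : (0:ℝ) ≤ 2 * b j0 - mass π S)]
    nlinarith [mul_le_mul_of_nonneg_right inner hM.le]
  · rw [div_pow, ← add_div, sub_le_iff_le_add, ← mul_div_assoc,
      div_add_div _ _ hM.ne' hM2.ne', le_div_iff₀ (by positivity)]
    have inner : mass π S ^ 2
        ≤ 2 * mass π Rd * mass π S + (b j0 ^ 2 + ∑ j ∈ Finset.univ.erase j0, b j ^ 2) := by
      nlinarith [mul_nonneg hDnn hDnn]
    have key := mul_le_mul_of_nonneg_right inner hM.le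
    ring_nf at key ⊢
    linarith
end ActiveLearning
end

section
/- Let S ⊆ H with |S| > 1 and h_0 ∈ S with π_S(h_0) > 1/2, let R = S \ {h_0}, and let T* be any query tree whose leaves contain S. If q_j maximizes the shrinkage-cost ratio, i.e. Δ_j(S, π_S)/c_j ≥ Δ_i(S, π_S)/c_i for all questions q_i (as the greedy tree's chosen question at S does), then δ_j / c_j ≥ 1 / (2 · C*(h_0)). -/
open Finset

namespace ActiveLearning

variable {H A : Type*} {m : ℕ}

lemma follow_disagree (q : Fin m → H → A) (T : QTree m H A) (h0 r : H)
    (hr : r ≠ h0) (hfh : follow q T h0 = h0) (hfr : follow q T r = r) :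
    ∃ i ∈ pathQs q T h0, q i r ≠ q i h0 := by
  induction T with
  | leaf h' =>
    simp only [follow] at hfh hfr
    exact absurd (hfr.symm.trans hfh) hr
  | node i ch ih =>
    by_cases hq : q i r = q i h0
    · simp only [follow] at hfh hfr
      rw [hq] at hfr
      obtain ⟨k, hk, hne⟩ := ih (q i h0) hfh hfr
      exact ⟨k, by simp [pathQs, hk], hne⟩
    · exact ⟨i, by simp [pathQs], hq⟩

lemma toFinset_sum_le_sum {c : Fin m → ℝ} (hc : ∀ i, 0 ≤ c i) (l : List (Fin m)) :
    ∑ i ∈ l.toFinset, c i ≤ (l.map c).sum := by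
  induction l with
  | nil => simp
  | cons a l ih =>
    simp only [List.toFinset_cons, List.map_cons, List.sum_cons]
    by_cases h : a ∈ l.toFinset
    · rw [Finset.insert_eq_self.2 h]; linarith [hc a]
    · rw [Finset.sum_insert h]; linarith

lemma shrink_bounds_s8 [Fintype A] [DecidableEq A] [DecidableEq H]
    (v : H → ℝ) (hv : ∀ h, 0 ≤ v h) (S : Finset H) (hmass : mass v S = 1)
    (h0 : H) (h0S : h0 ∈ S) (hp : 1 / 2 < v h0) (f : H → A) :
    mass v (S.filter fun s => f s ≠ f h0) ≤ shrink f S v ∧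
      shrink f S v ≤ 2 * mass v (S.filter fun s => f s ≠ f h0) := by
  set d : ℝ := mass v (S.filter fun s => f s ≠ f h0) with hd
  set x : A → ℝ := fun a => mass v (S.filter fun s => f s = a) with hx
  have hxnn : ∀ a, 0 ≤ x a := fun a => Finset.sum_nonneg fun s _ => hv s
  have hdnn : 0 ≤ d := Finset.sum_nonneg fun s _ => hv s
  have hx0 : x (f h0) + d = 1 := by
    rw [hx, hd]
    simpa [mass] using
      (Finset.sum_filter_add_sum_filter_not S (fun s => f s = f h0) v).trans hmass
  have hsum : ∑ a : A, x a = 1 := by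
    rw [hx]
    simp only [mass]
    rw [Finset.sum_fiberwise_of_maps_to (fun s _ => Finset.mem_univ (f s)) v]
    simpa [mass] using hmass
  have hpx : v h0 ≤ x (f h0) := by
    refine Finset.single_le_sum (fun s _ => hv s) ?_
    simp [h0S]
  have hxa : ∀ a, x a ≤ x (f h0) := by
    intro a
    by_cases ha : a = f h0
    · simp [ha]
    · have : x a ≤ d := by
        refine Finset.sum_le_sum_of_subset_of_nonneg ?_ fun s _ _ => hv s
        intro s hs
        simp only [Finset.mem_filter] at hs ⊢
        refine ⟨hs.1, ?_⟩
        rw [hs.2]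
        exact fun h => ha h
      nlinarith
  have hsq_le : ∑ a : A, (x a) ^ 2 ≤ x (f h0) := by
    calc ∑ a : A, (x a) ^ 2 ≤ ∑ a : A, x (f h0) * x a := by
          refine Finset.sum_le_sum fun a _ => ?_
          have := hxa a; have := hxnn a; nlinarith
      _ = x (f h0) * ∑ a : A, x a := by rw [Finset.mul_sum]
      _ = x (f h0) := by rw [hsum, mul_one]
  have hsq_ge : (x (f h0)) ^ 2 ≤ ∑ a : A, (x a) ^ 2 := by
    exact Finset.single_le_sum (f := fun a => (x a) ^ 2) (fun a _ => sq_nonneg _) (Finset.mem_univ _)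
  have hshr : shrink f S v = 1 - ∑ a : A, (x a) ^ 2 := by
    simp [shrink, hmass, hx]
  constructor
  · rw [hshr]; nlinarith
  · rw [hshr]; nlinarith

/-- If `h_0 ∈ S` has `π_S(h_0) > 1/2`, `T*` is any query tree whose leaves
contain `S`, and `q_j` maximizes the shrinkage-cost ratio on `S`, then
`δ_j / c_j ≥ 1 / (2 · C*(h_0))`. -/
theorem greedy_separates [Fintype H] [Fintype A] [DecidableEq H] [DecidableEq A]
    (π : H → ℝ) (hπpos : ∀ h, 0 < π h) (hπsum : ∑ h : H, π h = 1)
    (hH : 1 < Fintype.card H)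
    (q : Fin m → H → A) (c : Fin m → ℝ) (hc : ∀ i, 0 < c i)
    (S : Finset H) (hS : 1 < S.card)
    (h0 : H) (h0S : h0 ∈ S) (hh0 : 1 / 2 < restrict π S h0)
    (Tstar : QTree m H A) (hTstar : ValidOn q Tstar S)
    (j : Fin m)
    (hmax : ∀ i : Fin m,
      shrink (q i) S (restrict π S) / c i ≤ shrink (q j) S (restrict π S) / c j) :
    1 / (2 * pathCost q c Tstar h0) ≤
      mass (restrict π (S.erase h0))
        ((S.erase h0).filter fun r => q j r ≠ q j h0) / c j := by
  have hSne : S.Nonempty := Finset.card_pos.mp (by omega)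
  have hMS : 0 < mass π S := Finset.sum_pos (fun s _ => hπpos s) hSne
  set R := S.erase h0 with hR
  have hRne : R.Nonempty := by
    rw [← Finset.card_pos, hR, Finset.card_erase_of_mem h0S]; omega
  have hMR : 0 < mass π R := Finset.sum_pos (fun s _ => hπpos s) hRne
  set v := restrict π S with hv
  set w := restrict π R with hw
  have hvnn : ∀ h, 0 ≤ v h := by
    intro h; rw [hv, restrict]
    split
    · exact div_nonneg (hπpos h).le hMS.le
    · exact le_refl 0
  have hwnn : ∀ h, 0 ≤ w h := by
    intro h; rw [hw, restrict]
    split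
    · exact div_nonneg (hπpos h).le hMR.le
    · exact le_refl 0
  have hmassv : mass v S = 1 := by
    rw [mass]
    simp only [hv, restrict]
    rw [Finset.sum_congr rfl fun s hs => if_pos hs, ← Finset.sum_div]
    exact div_self hMS.ne'
  have hmassw : mass w R = 1 := by
    rw [mass]
    simp only [hw, restrict]
    rw [Finset.sum_congr rfl fun s hs => if_pos hs, ← Finset.sum_div]
    exact div_self hMR.ne'
  have hMdecomp : π h0 + mass π R = mass π S := by
    simpa [mass, hR] using Finset.add_sum_erase S π h0S
  have hvh0 : v h0 = π h0 / mass π S := by simp [hv, restrict, h0S]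
  set ρ := mass π R / mass π S with hρ
  have hρpos : 0 < ρ := div_pos hMR hMS
  have hρeq : 1 - v h0 = ρ := by
    rw [hvh0, hρ]
    field_simp
    linarith
  have hp' : 1 / 2 < v h0 := hh0
  have hrel : ∀ f : H → A, mass v (S.filter fun s => f s ≠ f h0)
      = ρ * mass w (R.filter fun r => f r ≠ f h0) := by
    intro f
    have hset : S.filter (fun s => f s ≠ f h0) = R.filter (fun r => f r ≠ f h0) := by
      ext s
      simp only [Finset.mem_filter, hR, Finset.mem_erase]
      constructor
      · rintro ⟨hsS, hne⟩
        exact ⟨⟨fun h => hne (by rw [h]), hsS⟩, hne⟩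
      · rintro ⟨⟨_, hsS⟩, hne⟩
        exact ⟨hsS, hne⟩
    have h1 : mass v (S.filter fun s => f s ≠ f h0)
        = (∑ s ∈ S.filter (fun s => f s ≠ f h0), π s) / mass π S := by
      rw [mass]
      simp only [hv, restrict]
      rw [Finset.sum_congr rfl fun s hs => if_pos (Finset.mem_of_mem_filter s hs),
        ← Finset.sum_div]
    have h2 : mass w (R.filter fun r => f r ≠ f h0)
        = (∑ s ∈ R.filter (fun r => f r ≠ f h0), π s) / mass π R := by
      rw [mass]
      simp only [hw, restrict]
      rw [Finset.sum_congr rfl fun s hs => if_pos (Finset.mem_of_mem_filter s hs),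
        ← Finset.sum_div]
    rw [h1, h2, hset, hρ]
    field_simp
  set Cstar := pathCost q c Tstar h0 with hC
  set δ : Fin m → ℝ := fun i => mass w (R.filter fun r => q i r ≠ q i h0) with hδ
  have hδnn : ∀ i, 0 ≤ δ i := fun i => Finset.sum_nonneg fun s _ => hwnn s
  set F := (pathQs q Tstar h0).toFinset with hF
  have hcover : 1 ≤ ∑ i ∈ F, δ i := by
    have hkey : mass w R ≤ ∑ i ∈ F, δ i := by
      calc mass w R = ∑ r ∈ R, w r := rfl
        _ ≤ ∑ r ∈ R, ∑ i ∈ F, (if q i r ≠ q i h0 then w r else 0) := by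
            refine Finset.sum_le_sum fun r hr => ?_
            have hrS : r ∈ S := Finset.mem_of_mem_erase (hR ▸ hr)
            have hrne : r ≠ h0 := Finset.ne_of_mem_erase (hR ▸ hr)
            obtain ⟨i, hi, hne⟩ :=
              follow_disagree q Tstar h0 r hrne (hTstar h0 h0S) (hTstar r hrS)
            refine le_trans (le_of_eq (by simp [hne]))
              (Finset.single_le_sum
                (f := fun i => if q i r ≠ q i h0 then w r else 0)
                (fun k _ => by split <;> [exact hwnn r; exact le_refl 0])
                (List.mem_toFinset.2 hi))
        _ = ∑ i ∈ F, ∑ r ∈ R, (if q i r ≠ q i h0 then w r else 0) := Finset.sum_comm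
        _ = ∑ i ∈ F, δ i := by
            refine Finset.sum_congr rfl fun i _ => ?_
            simp [hδ, mass, Finset.sum_filter]
    rw [hmassw] at hkey
    exact hkey
  have hFne : F.Nonempty := by
    rcases Finset.eq_empty_or_nonempty F with h | h
    · rw [h] at hcover; simp at hcover; linarith
    · exact h
  have hcF : 0 < ∑ i ∈ F, c i := Finset.sum_pos (fun i _ => hc i) hFne
  have hCge : ∑ i ∈ F, c i ≤ Cstar := by
    rw [hC, pathCost_eq_sum]
    exact toFinset_sum_le_sum (fun i => (hc i).le) _
  have hCpos : 0 < Cstar := lt_of_lt_of_le hcF hCge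
  obtain ⟨i, hiF, hkey⟩ : ∃ i ∈ F, c i ≤ δ i * Cstar := by
    by_contra hcon
    push_neg at hcon
    have hlt : ∑ i ∈ F, δ i * Cstar < ∑ i ∈ F, c i :=
      Finset.sum_lt_sum_of_nonempty hFne fun i hi => hcon i hi
    rw [← Finset.sum_mul] at hlt
    nlinarith
  have hi1 := (shrink_bounds_s8 v hvnn S hmassv h0 h0S hp' (q i)).1
  have hj2 := (shrink_bounds_s8 v hvnn S hmassv h0 h0S hp' (q j)).2
  rw [hrel (q i)] at hi1
  rw [hrel (q j)] at hj2
  have hmaxi := hmax i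
  have hci := hc i
  have hcj := hc j
  have hdiv : shrink (q i) S v * c j ≤ shrink (q j) S v * c i :=
    (div_le_div_iff₀ hci hcj).1 hmaxi
  have t1 : ρ * δ i * c j ≤ shrink (q j) S v * c i :=
    le_trans (mul_le_mul_of_nonneg_right (by linarith [hi1] : ρ * δ i ≤ shrink (q i) S v) hcj.le) hdiv
  have t2 : shrink (q j) S v * c i ≤ 2 * (ρ * δ j) * c i := by
    have := mul_le_mul_of_nonneg_right hj2 hci.le
    linarith
  have t3 : 2 * (ρ * δ j) * c i ≤ 2 * (ρ * δ j) * (δ i * Cstar) :=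
    mul_le_mul_of_nonneg_left hkey (by nlinarith [hδnn j, hρpos.le])
  have t : ρ * δ i * c j ≤ 2 * (ρ * δ j) * (δ i * Cstar) :=
    le_trans t1 (le_trans t2 t3)
  have hδipos : 0 < δ i := by nlinarith [hδnn i]
  have hcj2 : c j ≤ 2 * δ j * Cstar := by
    have hpos : 0 < ρ * δ i := mul_pos hρpos hδipos
    have t' : ρ * δ i * c j ≤ ρ * δ i * (2 * δ j * Cstar) := by
      ring_nf
      ring_nf at t
      exact t
    exact le_of_mul_le_mul_left t' hpos
  show (1 : ℝ) / (2 * Cstar) ≤ δ j / c j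
  rw [div_le_div_iff₀ (by positivity) hcj]
  linarith
end ActiveLearning
end
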